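/- Let T be a tournament on n ≥ 4 vertices, C3(T) the number of 3-element vertex subsets spanning a cyclic triangle, and C4(T) the number of 4-element vertex subsets whose induced subtournament contains a directed 4-cycle. Then 9·C3(T)² ≤ C(n,2)·(3·C3(T) + 2·C4(T)). -/

import Mathlib

open Finset

/-- A tournament on `Fin n`: an orientation of the complete graph, i.e. no loops and
for all distinct `x, y` exactly one of `r x y`, `r y x` holds. -/
def IsTournament {n : ℕ} (r : Fin n → Fin n → Prop) : Prop :=
  (∀ x, ¬ r x x) ∧ ∀ x y : Fin n, x ≠ y → ((r x y ∧ ¬ r y x) ∨ (r y x ∧ ¬ r x y))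

/-- `s` spans a cyclic triangle: `s = {x,y,z}` with `x→y→z→x`. -/
def IsCyclicTriple {n : ℕ} (r : Fin n → Fin n → Prop) (s : Finset (Fin n)) : Prop :=
  ∃ x y z : Fin n, x ≠ y ∧ y ≠ z ∧ x ≠ z ∧ s = {x, y, z} ∧ r x y ∧ r y z ∧ r z x

/-- `s` spans a transitive triple. -/
def IsTransTriple {n : ℕ} (r : Fin n → Fin n → Prop) (s : Finset (Fin n)) : Prop :=
  ∃ x y z : Fin n, x ≠ y ∧ y ≠ z ∧ x ≠ z ∧ s = {x, y, z} ∧ r x y ∧ r y z ∧ r x z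

/-- `s` contains a directed 4-cycle through all of its (four) elements. -/
def HasCycle4 {n : ℕ} (r : Fin n → Fin n → Prop) (s : Finset (Fin n)) : Prop :=
  ∃ a b c d : Fin n, a ≠ b ∧ a ≠ c ∧ a ≠ d ∧ b ≠ c ∧ b ≠ d ∧ c ≠ d ∧
    s = {a, b, c, d} ∧ r a b ∧ r b c ∧ r c d ∧ r d a

/-- `s` spans a transitive 4-vertex subtournament. -/
def IsTrans4 {n : ℕ} (r : Fin n → Fin n → Prop) (s : Finset (Fin n)) : Prop :=
  ∃ a b c d : Fin n, a ≠ b ∧ a ≠ c ∧ a ≠ d ∧ b ≠ c ∧ b ≠ d ∧ c ≠ d ∧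
    s = {a, b, c, d} ∧ r a b ∧ r a c ∧ r a d ∧ r b c ∧ r b d ∧ r c d

open Classical in
/-- `C3(T)`: number of 3-element vertex subsets spanning a cyclic triangle. -/
noncomputable def cyc3Count {n : ℕ} (r : Fin n → Fin n → Prop) : ℕ :=
  ((univ.powersetCard 3).filter (fun s => IsCyclicTriple r s)).card

open Classical in
/-- `T3(T)`: number of 3-element vertex subsets spanning a transitive triple. -/
noncomputable def trans3Count {n : ℕ} (r : Fin n → Fin n → Prop) : ℕ :=
  ((univ.powersetCard 3).filter (fun s => IsTransTriple r s)).card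

open Classical in
/-- `C4(T)`: number of 4-element vertex subsets containing a directed 4-cycle. -/
noncomputable def cyc4Count {n : ℕ} (r : Fin n → Fin n → Prop) : ℕ :=
  ((univ.powersetCard 4).filter (fun s => HasCycle4 r s)).card

open Classical in
/-- `T4(T)`: number of 4-element vertex subsets spanning a transitive subtournament. -/
noncomputable def trans4Count {n : ℕ} (r : Fin n → Fin n → Prop) : ℕ :=
  ((univ.powersetCard 4).filter (fun s => IsTrans4 r s)).card

lemma tourn_asymm {n : ℕ} {r : Fin n → Fin n → Prop} (hT : IsTournament r)
    {a b : Fin n} (h : r a b) : ¬ r b a := by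
  by_cases hab : a = b
  · subst hab; exact absurd h (hT.1 a)
  · rcases hT.2 a b hab with ⟨_, h2⟩ | ⟨_, h2⟩
    · exact h2
    · exact absurd h h2

lemma cyclic_third {n : ℕ} {r : Fin n → Fin n → Prop} (hT : IsTournament r)
    {s : Finset (Fin n)} (hs : IsCyclicTriple r s) {u v : Fin n}
    (hu : u ∈ s) (hv : v ∈ s) (huv : r u v) :
    ∃ w : Fin n, w ≠ u ∧ w ≠ v ∧ s = {u, v, w} ∧ r v w ∧ r w u := by
  obtain ⟨x, y, z, hxy, hyz, hxz, rfl, rxy, ryz, rzx⟩ := hs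
  simp only [mem_insert, mem_singleton] at hu hv
  rcases hu with rfl | rfl | rfl <;> rcases hv with rfl | rfl | rfl
  · exact absurd huv (hT.1 _)
  · exact ⟨z, (Ne.symm hxz), (Ne.symm hyz), rfl, ryz, rzx⟩
  · exact absurd huv (tourn_asymm hT rzx)
  · exact absurd huv (tourn_asymm hT rxy)
  · exact absurd huv (hT.1 _)
  · refine ⟨x, hxy, hxz, ?_, rzx, rxy⟩
    ext t; simp only [mem_insert, mem_singleton]; tauto
  · refine ⟨y, hyz, Ne.symm hxy, ?_, rxy, ryz⟩
    ext t; simp only [mem_insert, mem_singleton]; tauto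
  · exact absurd huv (tourn_asymm hT ryz)
  · exact absurd huv (hT.1 _)

lemma card3 {n : ℕ} {x y z : Fin n} (hxy : x ≠ y) (hxz : x ≠ z) (hyz : y ≠ z) :
    ({x, y, z} : Finset (Fin n)).card = 3 := by
  rw [card_insert_of_notMem (by simp [hxy, hxz]),
    card_insert_of_notMem (by simp [hyz]), card_singleton]

lemma card4 {n : ℕ} {x y z w : Fin n} (hxy : x ≠ y) (hxz : x ≠ z) (hxw : x ≠ w)
    (hyz : y ≠ z) (hyw : y ≠ w) (hzw : z ≠ w) :
    ({x, y, z, w} : Finset (Fin n)).card = 4 := by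
  rw [card_insert_of_notMem (by simp [hxy, hxz, hxw]),
    card_insert_of_notMem (by simp [hyz, hyw]),
    card_insert_of_notMem (by simp [hzw]), card_singleton]

/-- Structure of two distinct cyclic triples sharing two vertices. -/
lemma pair_struct {n : ℕ} {r : Fin n → Fin n → Prop} (hT : IsTournament r)
    {s s' : Finset (Fin n)} (hs : IsCyclicTriple r s) (hs' : IsCyclicTriple r s')
    (hne : s ≠ s') (hcard : (s ∩ s').card = 2) :
    ∃ p q a b : Fin n, p ≠ q ∧ a ≠ p ∧ a ≠ q ∧ b ≠ p ∧ b ≠ q ∧ a ≠ b ∧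
      s = {p, q, a} ∧ s' = {p, q, b} ∧
      r p q ∧ r q a ∧ r a p ∧ r q b ∧ r b p := by
  obtain ⟨p0, q0, hpq0, hI⟩ := Finset.card_eq_two.mp hcard
  have hmem : ∀ x ∈ ({p0, q0} : Finset (Fin n)), x ∈ s ∧ x ∈ s' := by
    intro x hx
    rw [← hI] at hx
    exact ⟨(Finset.inter_subset_left) hx, (Finset.inter_subset_right) hx⟩
  -- choose orientation
  have key : ∀ p q : Fin n, p ≠ q → p ∈ s → q ∈ s → p ∈ s' → q ∈ s' → r p q →
      ∃ p' q' a b : Fin n, p' ≠ q' ∧ a ≠ p' ∧ a ≠ q' ∧ b ≠ p' ∧ b ≠ q' ∧ a ≠ b ∧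
      s = {p', q', a} ∧ s' = {p', q', b} ∧
      r p' q' ∧ r q' a ∧ r a p' ∧ r q' b ∧ r b p' := by
    intro p q hpq hps hqs hps' hqs' hr
    obtain ⟨a, hap, haq, hsa, hqa, hap'⟩ := cyclic_third hT hs hps hqs hr
    obtain ⟨b, hbp, hbq, hsb, hqb, hbp'⟩ := cyclic_third hT hs' hps' hqs' hr
    have hab : a ≠ b := by
      rintro rfl
      exact hne (hsa.trans hsb.symm)
    exact ⟨p, q, a, b, hpq, hap, haq, hbp, hbq, hab, hsa, hsb, hr, hqa, hap', hqb, hbp'⟩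
  have h1 := hmem p0 (by simp)
  have h2 := hmem q0 (by simp)
  rcases hT.2 p0 q0 hpq0 with ⟨hr, _⟩ | ⟨hr, _⟩
  · exact key p0 q0 hpq0 h1.1 h2.1 h1.2 h2.2 hr
  · exact key q0 p0 (Ne.symm hpq0) h2.1 h1.1 h2.2 h1.2 hr

lemma union_eq {n : ℕ} {p q a b : Fin n} :
    ({p, q, a} : Finset (Fin n)) ∪ {p, q, b} = {p, q, a, b} := by
  ext t; simp only [mem_union, mem_insert, mem_singleton]; tauto

/-- Two distinct cyclic triples sharing two vertices give a 4-set with a 4-cycle. -/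
lemma pair_cycle4 {n : ℕ} {r : Fin n → Fin n → Prop} (hT : IsTournament r)
    {s s' : Finset (Fin n)} (hs : IsCyclicTriple r s) (hs' : IsCyclicTriple r s')
    (hne : s ≠ s') (hcard : (s ∩ s').card = 2) :
    HasCycle4 r (s ∪ s') ∧ (s ∪ s').card = 4 := by
  obtain ⟨p, q, a, b, hpq, hap, haq, hbp, hbq, hab, hsa, hsb, hr, hqa, hap', hqb, hbp'⟩ :=
    pair_struct hT hs hs' hne hcard
  have hu : s ∪ s' = {p, q, a, b} := by rw [hsa, hsb]; exact union_eq
  constructor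
  · rcases hT.2 a b hab with ⟨hab', _⟩ | ⟨hba', _⟩
    · refine ⟨q, a, b, p, Ne.symm haq, Ne.symm hbq, Ne.symm hpq, hab, hap, hbp, ?_,
        hqa, hab', hbp', hr⟩
      rw [hu]; ext t; simp only [mem_insert, mem_singleton]; tauto
    · refine ⟨q, b, a, p, Ne.symm hbq, Ne.symm haq, Ne.symm hpq, Ne.symm hab, hbp, hap, ?_,
        hqb, hba', hap', hr⟩
      rw [hu]; ext t; simp only [mem_insert, mem_singleton]; tauto
  · rw [hu]
    exact card4 hpq (Ne.symm hap) (Ne.symm hbp) (Ne.symm haq) (Ne.symm hbq) hab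

/-- Any cyclic 3-subset of the union of two edge-sharing cyclic triples is one of them. -/
lemma cyclic_sub_of_union {n : ℕ} {r : Fin n → Fin n → Prop} (hT : IsTournament r)
    {s s' s₁ : Finset (Fin n)} (hs : IsCyclicTriple r s) (hs' : IsCyclicTriple r s')
    (hne : s ≠ s') (hcard : (s ∩ s').card = 2)
    (h1 : IsCyclicTriple r s₁) (hsub : s₁ ⊆ s ∪ s') (hc1 : s₁.card = 3) :
    s₁ = s ∨ s₁ = s' := by
  obtain ⟨p, q, a, b, hpq, hap, haq, hbp, hbq, hab, hsa, hsb, hr, hqa, hap', hqb, hbp'⟩ :=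
    pair_struct hT hs hs' hne hcard
  have hu : s ∪ s' = {p, q, a, b} := by rw [hsa, hsb]; exact union_eq
  rw [hu] at hsub
  have hp1 : p ∈ s₁ := by
    by_contra hp
    have hsub2 : s₁ ⊆ ({q, a, b} : Finset (Fin n)) := by
      intro x hx
      have hxm := hsub hx
      simp only [mem_insert, mem_singleton] at hxm ⊢
      rcases hxm with rfl | hxm
      · exact absurd hx hp
      · exact hxm
    have heq : s₁ = ({q, a, b} : Finset (Fin n)) :=
      Finset.eq_of_subset_of_card_le hsub2
        (by rw [card3 (Ne.symm haq) (Ne.symm hbq) hab, hc1])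
    have hq1 : q ∈ s₁ := by rw [heq]; simp
    have ha1 : a ∈ s₁ := by rw [heq]; simp
    obtain ⟨w, hwq, hwa, hs1w, _, hwq'⟩ := cyclic_third hT h1 hq1 ha1 hqa
    have hwb : w = b := by
      have hw : w ∈ s₁ := by rw [hs1w]; simp
      rw [heq] at hw; simp only [mem_insert, mem_singleton] at hw
      tauto
    subst hwb
    exact tourn_asymm hT hqb hwq'
  have hq1 : q ∈ s₁ := by
    by_contra hq
    have hsub2 : s₁ ⊆ ({p, a, b} : Finset (Fin n)) := by
      intro x hx
      have hxm := hsub hx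
      simp only [mem_insert, mem_singleton] at hxm ⊢
      rcases hxm with rfl | rfl | hxm
      · tauto
      · exact absurd hx hq
      · exact Or.inr hxm
    have heq : s₁ = ({p, a, b} : Finset (Fin n)) :=
      Finset.eq_of_subset_of_card_le hsub2
        (by rw [card3 (Ne.symm hap) (Ne.symm hbp) hab, hc1])
    have ha1 : a ∈ s₁ := by rw [heq]; simp
    have hp1' : p ∈ s₁ := by rw [heq]; simp
    obtain ⟨w, hwa, hwp, hs1w, hpw, hwa'⟩ := cyclic_third hT h1 ha1 hp1' hap'
    have hwb : w = b := by
      have hw : w ∈ s₁ := by rw [hs1w]; simp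
      rw [heq] at hw; simp only [mem_insert, mem_singleton] at hw
      tauto
    subst hwb
    exact tourn_asymm hT hbp' hpw
  obtain ⟨w, hwp, hwq, hs1w, _, _⟩ := cyclic_third hT h1 hp1 hq1 hr
  have hw : w ∈ s₁ := by rw [hs1w]; simp
  have hwm := hsub hw
  simp only [mem_insert, mem_singleton] at hwm
  rcases hwm with rfl | rfl | rfl | rfl
  · exact absurd rfl hwp
  · exact absurd rfl hwq
  · left; rw [hs1w, hsa]
  · right; rw [hs1w, hsb]

lemma nat_sq_split (m : ℕ) : m ^ 2 = m + m * (m - 1) := by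
  cases m with
  | zero => rfl
  | succ k => rw [Nat.succ_sub_one]; ring

lemma nat_offdiag_arith (m : ℕ) : m * m - m = m * (m - 1) := by
  cases m with
  | zero => rfl
  | succ k => rw [Nat.succ_sub_one, Nat.mul_succ, Nat.add_sub_cancel]


set_option maxHeartbeats 1000000 in
/-- `9·C3(T)² ≤ C(n,2)·(3·C3(T) + 2·C4(T))`. -/
theorem stmt_7 {n : ℕ} (hn : 4 ≤ n) (r : Fin n → Fin n → Prop) (hT : IsTournament r) :
    9 * cyc3Count r ^ 2 ≤ n.choose 2 * (3 * cyc3Count r + 2 * cyc4Count r) := by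
  classical
  set C3s : Finset (Finset (Fin n)) :=
    (univ.powersetCard 3).filter (fun s => IsCyclicTriple r s) with hC3s
  set C4s : Finset (Finset (Fin n)) :=
    (univ.powersetCard 4).filter (fun s => HasCycle4 r s) with hC4s
  have hC3card : cyc3Count r = C3s.card := by
    rw [cyc3Count, hC3s]
  have hC4card : cyc4Count r = C4s.card := by
    rw [cyc4Count, hC4s]
  have hmemC3 : ∀ s ∈ C3s, IsCyclicTriple r s ∧ s.card = 3 := by
    intro s hs
    rw [hC3s, mem_filter, mem_powersetCard] at hs
    exact ⟨hs.2, hs.1.2⟩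
  set P2 : Finset (Finset (Fin n)) := (univ : Finset (Fin n)).powersetCard 2 with hP2
  set F : Finset (Fin n) → Finset (Finset (Fin n)) :=
    (fun e => C3s.filter (fun s => e ⊆ s)) with hF
  -- intersections
  have hinter : ∀ s s' : Finset (Fin n), s.card = 3 → s'.card = 3 → s ≠ s' →
      (s ∩ s').card ≤ 2 := by
    intro s s' h3 h3' hne
    by_contra h
    push_neg at h
    have hsub : s ∩ s' ⊆ s := inter_subset_left
    have hle : (s ∩ s').card ≤ 3 := h3 ▸ card_le_card hsub
    have heq : s ∩ s' = s := eq_of_subset_of_card_le hsub (by omega)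
    have hss' : s ⊆ s' := heq ▸ inter_subset_right
    exact hne (eq_of_subset_of_card_le hss' (by omega))
  have hedge : ∀ (e s s' : Finset (Fin n)), e.card = 2 → s.card = 3 → s'.card = 3 →
      s ≠ s' → e ⊆ s → e ⊆ s' → e = s ∩ s' := by
    intro e s s' he h3 h3' hne hes hes'
    exact eq_of_subset_of_card_le (subset_inter hes hes')
      (he ▸ hinter s s' h3 h3' hne)
  -- first double count
  have hA : ∑ e ∈ P2, (F e).card = 3 * C3s.card := by
    calc ∑ e ∈ P2, (F e).card
        = ∑ e ∈ P2, ∑ s ∈ C3s, if e ⊆ s then 1 else 0 := by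
          refine sum_congr rfl fun e _ => ?_
          rw [hF]; exact card_filter _ _
      _ = ∑ s ∈ C3s, ∑ e ∈ P2, if e ⊆ s then 1 else 0 := sum_comm
      _ = ∑ s ∈ C3s, (P2.filter (fun e => e ⊆ s)).card := by
          refine sum_congr rfl fun s _ => (card_filter _ _).symm
      _ = ∑ s ∈ C3s, 3 := by
          refine sum_congr rfl fun s hs => ?_
          have h3 := (hmemC3 s hs).2
          have : P2.filter (fun e => e ⊆ s) = s.powersetCard 2 := by
            ext e
            simp only [hP2, mem_filter, mem_powersetCard, subset_univ, true_and]
            tauto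
          rw [this, card_powersetCard, h3]; rfl
      _ = 3 * C3s.card := by rw [sum_const, smul_eq_mul, mul_comm]
  -- the pair set
  set Q : Finset (Finset (Fin n) × Finset (Fin n)) :=
    P2.biUnion (fun e => (F e).offDiag) with hQ
  have hQprop : ∀ p ∈ Q, IsCyclicTriple r p.1 ∧ IsCyclicTriple r p.2 ∧
      p.1.card = 3 ∧ p.2.card = 3 ∧ p.1 ≠ p.2 ∧ (p.1 ∩ p.2).card = 2 := by
    intro p hp
    rw [hQ, mem_biUnion] at hp
    obtain ⟨e, he, hp⟩ := hp
    rw [mem_offDiag] at hp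
    obtain ⟨h1, h2, hne⟩ := hp
    rw [hF, mem_filter] at h1 h2
    have hm1 := hmemC3 _ h1.1
    have hm2 := hmemC3 _ h2.1
    have hecard : e.card = 2 := by
      rw [hP2, mem_powersetCard] at he; exact he.2
    have := hedge e p.1 p.2 hecard hm1.2 hm2.2 hne h1.2 h2.2
    exact ⟨hm1.1, hm2.1, hm1.2, hm2.2, hne, this ▸ hecard⟩
  have hQcard : Q.card = ∑ e ∈ P2, (F e).card * ((F e).card - 1) := by
    rw [hQ, card_biUnion]
    · refine sum_congr rfl fun e _ => ?_
      rw [offDiag_card, nat_offdiag_arith]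
    · intro e he e' he' hee'
      rw [Function.onFun, Finset.disjoint_left]
      rintro ⟨s, s'⟩ hmem hmem'
      rw [mem_offDiag] at hmem hmem'
      obtain ⟨h1, h2, hne⟩ := hmem
      obtain ⟨h1', h2', _⟩ := hmem'
      rw [hF, mem_filter] at h1 h2 h1' h2'
      have hm1 := hmemC3 _ h1.1
      have hm2 := hmemC3 _ h2.1
      have hec : e.card = 2 := by rw [hP2, mem_coe, mem_powersetCard] at he; exact he.2
      have hec' : e'.card = 2 := by rw [hP2, mem_coe, mem_powersetCard] at he'; exact he'.2
      have q1 := hedge e s s' hec hm1.2 hm2.2 hne h1.2 h2.2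
      have q2 := hedge e' s s' hec' hm1.2 hm2.2 hne h1'.2 h2'.2
      exact hee' (q1.trans q2.symm)
  -- image of the union map
  have himg : Q.image (fun p => p.1 ∪ p.2) ⊆ C4s := by
    intro b hb
    rw [mem_image] at hb
    obtain ⟨p, hp, rfl⟩ := hb
    obtain ⟨hc1, hc2, _, _, hne, hint⟩ := hQprop p hp
    have h := pair_cycle4 hT hc1 hc2 hne hint
    rw [hC4s, mem_filter, mem_powersetCard]
    exact ⟨⟨subset_univ _, h.2⟩, h.1⟩
  have hfiber : ∀ b ∈ Q.image (fun p => p.1 ∪ p.2),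
      (Q.filter (fun p => p.1 ∪ p.2 = b)).card ≤ 2 := by
    intro b hb
    rw [mem_image] at hb
    obtain ⟨⟨s0, s0'⟩, hp0, rfl⟩ := hb
    obtain ⟨hc0, hc0', _, _, hne0, hint0⟩ := hQprop _ hp0
    have hsubpair : Q.filter (fun p => p.1 ∪ p.2 = s0 ∪ s0') ⊆
        ({(s0, s0'), (s0', s0)} : Finset _) := by
      rintro ⟨s, s'⟩ hp
      rw [mem_filter] at hp
      obtain ⟨hc, hc', hcd, hcd', hne, _⟩ := hQprop _ hp.1
      have hu : s ∪ s' = s0 ∪ s0' := hp.2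
      have h1 : s = s0 ∨ s = s0' :=
        cyclic_sub_of_union hT hc0 hc0' hne0 hint0 hc
          (hu ▸ subset_union_left) hcd
      have h2 : s' = s0 ∨ s' = s0' :=
        cyclic_sub_of_union hT hc0 hc0' hne0 hint0 hc'
          (hu ▸ subset_union_right) hcd'
      simp only [mem_insert, mem_singleton, Prod.mk.injEq]
      rcases h1 with rfl | rfl <;> rcases h2 with h2 | h2 <;> try tauto
    calc (Q.filter (fun p => p.1 ∪ p.2 = s0 ∪ s0')).card
        ≤ ({(s0, s0'), (s0', s0)} : Finset _).card := card_le_card hsubpair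
      _ ≤ 2 := (card_insert_le _ _).trans (by simp)
  have hB : ∑ e ∈ P2, (F e).card * ((F e).card - 1) ≤ 2 * C4s.card := by
    rw [← hQcard]
    calc Q.card ≤ 2 * (Q.image (fun p => p.1 ∪ p.2)).card :=
          card_le_mul_card_image Q 2 hfiber
      _ ≤ 2 * C4s.card := Nat.mul_le_mul_left 2 (card_le_card himg)
  have hP2card : P2.card = n.choose 2 := by
    rw [hP2, card_powersetCard, card_univ, Fintype.card_fin]
  have hsq : ∑ e ∈ P2, ((F e).card) ^ 2 =
      ∑ e ∈ P2, (F e).card + ∑ e ∈ P2, (F e).card * ((F e).card - 1) := by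
    rw [← sum_add_distrib]
    exact sum_congr rfl fun e _ => nat_sq_split _
  calc 9 * cyc3Count r ^ 2 = (3 * cyc3Count r) ^ 2 := by ring
    _ = (∑ e ∈ P2, (F e).card) ^ 2 := by rw [hC3card, hA]
    _ ≤ P2.card * ∑ e ∈ P2, ((F e).card) ^ 2 := sq_sum_le_card_mul_sum_sq
    _ = n.choose 2 * (3 * cyc3Count r + ∑ e ∈ P2, (F e).card * ((F e).card - 1)) := by
        rw [hP2card, hsq, hA, hC3card]
    _ ≤ n.choose 2 * (3 * cyc3Count r + 2 * cyc4Count r) := by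
        refine Nat.mul_le_mul_left _ (Nat.add_le_add_left ?_ _)
        rw [hC4card]
        exact hB
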